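/- Let M be a metric space with density character Γ > ℵ₀. Then M contains a discrete subset L (every point of L is isolated in L; equivalently, every convergent sequence in L is eventually constant) with card(L) = Γ. -/

import Mathlib

universe u

/-- The density character of a metric space: the least cardinality of a dense subset. -/
noncomputable def densChar (M : Type u) [MetricSpace M] : Cardinal.{u} :=
  sInf {c : Cardinal.{u} | ∃ s : Set M, Dense s ∧ Cardinal.mk s = c}

namespace Stmt15

open Cardinal Metric Set


variable {M : Type u} [MetricSpace M]

/-- ε-separated set -/
def Sep (ε : ℝ) (A : Set M) : Prop := ∀ x ∈ A, ∀ y ∈ A, x ≠ y → ε ≤ dist x y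

/-- density of a subset (as subspace), via closures in M -/
noncomputable def mD (A : Set M) : Cardinal.{u} :=
  sInf {c | ∃ s : Set M, s ⊆ A ∧ A ⊆ closure s ∧ Cardinal.mk s = c}

theorem mD_exists (A : Set M) : ∃ s : Set M, s ⊆ A ∧ A ⊆ closure s ∧ #s = mD A := by
  have h : mD A ∈ {c | ∃ s : Set M, s ⊆ A ∧ A ⊆ closure s ∧ Cardinal.mk s = c} :=
    csInf_mem ⟨#A, A, Subset.rfl, subset_closure, rfl⟩
  obtain ⟨s, h1, h2, h3⟩ := h
  exact ⟨s, h1, h2, h3⟩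

theorem mD_le {A s : Set M} (h1 : s ⊆ A) (h2 : A ⊆ closure s) : mD A ≤ #s :=
  csInf_le' ⟨s, h1, h2, rfl⟩

theorem mD_empty : mD (∅ : Set M) = 0 := by
  refine le_antisymm ?_ (zero_le)
  have := mD_le (A := (∅ : Set M)) (s := (∅ : Set M)) Subset.rfl (by simp)
  simpa using this

theorem mD_singleton (x : M) : mD ({x} : Set M) ≤ 1 := by
  have := mD_le (A := ({x} : Set M)) (s := {x}) Subset.rfl subset_closure
  simpa using this

/-- cardinality of a separated subset is at most the density -/
theorem sep_card_le {ε : ℝ} (hε : 0 < ε) {E A : Set M} (hsep : Sep ε E) (hEA : E ⊆ A) :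
    Cardinal.mk E ≤ mD A := by
  obtain ⟨s, hs1, hs2, hs3⟩ := mD_exists A
  have hch : ∀ e : E, ∃ p : s, dist (e : M) (p : M) < ε / 2 := by
    rintro ⟨e, he⟩
    have : (e : M) ∈ closure s := hs2 (hEA he)
    rw [Metric.mem_closure_iff] at this
    obtain ⟨p, hp, hd⟩ := this (ε / 2) (by linarith)
    exact ⟨⟨p, hp⟩, hd⟩
  choose f hf using hch
  have hinj : Function.Injective f := by
    rintro ⟨e, he⟩ ⟨e', he'⟩ hfe
    by_contra hne
    have hne' : e ≠ e' := fun h => hne (by simpa using h)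
    have h1 := hf ⟨e, he⟩
    have h2 := hf ⟨e', he'⟩
    rw [hfe] at h1
    have : dist e e' < ε := by
      calc dist e e' ≤ dist e (f ⟨e', he'⟩ : M) + dist (f ⟨e', he'⟩ : M) e' := dist_triangle _ _ _
        _ < ε / 2 + ε / 2 := by rw [dist_comm (f ⟨e', he'⟩ : M) e']; linarith
        _ = ε := by ring
    exact absurd (hsep e he e' he' hne') (by linarith)
  calc #E ≤ #s := mk_le_of_injective hinj
    _ = mD A := hs3

/-- monotonicity of density up to ℵ₀ -/
theorem mD_mono {A B : Set M} (hAB : A ⊆ B) : mD A ≤ max ℵ₀ (mD B) := by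
  rcases A.eq_empty_or_nonempty with rfl | ⟨a₀, ha₀⟩
  · simp [mD_empty]
  obtain ⟨s, hs1, hs2, hs3⟩ := mD_exists B
  classical
  let f : s × ℕ → M := fun p =>
    if h : (A ∩ ball (p.1 : M) (1 / (p.2 + 1))).Nonempty then h.choose else a₀
  have hfA : ∀ p, f p ∈ A := by
    intro p
    by_cases h : (A ∩ ball (p.1 : M) (1 / (p.2 + 1))).Nonempty
    · simp only [f, dif_pos h]; exact h.choose_spec.1
    · simp only [f, dif_neg h]; exact ha₀
  have hdense : A ⊆ closure (Set.range f) := by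
    intro a ha
    rw [Metric.mem_closure_iff]
    intro δ hδ
    obtain ⟨n, hn⟩ := exists_nat_one_div_lt (by linarith : (0:ℝ) < δ / 2)
    have := hs2 (hAB ha)
    rw [Metric.mem_closure_iff] at this
    obtain ⟨p, hp, hdp⟩ := this (1 / (n + 1)) (by positivity)
    have hne : (A ∩ ball p (1 / (n + 1))).Nonempty :=
      ⟨a, ha, by rw [mem_ball]; exact hdp⟩
    refine ⟨f (⟨p, hp⟩, n), ⟨(⟨p, hp⟩, n), rfl⟩, ?_⟩
    have hmem : f (⟨p, hp⟩, n) ∈ A ∩ ball p (1 / (n + 1)) := by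
      simp only [f, dif_pos hne]; exact hne.choose_spec
    have h1 : dist (f (⟨p, hp⟩, n)) p < 1 / (n + 1) := by
      have := hmem.2; rwa [mem_ball] at this
    have h2 : (1 : ℝ) / (n + 1) < δ / 2 := by exact_mod_cast hn
    calc dist a (f (⟨p, hp⟩, n)) ≤ dist a p + dist p (f (⟨p, hp⟩, n)) := dist_triangle _ _ _
      _ < 1 / (n + 1) + 1 / (n + 1) := by
          rw [dist_comm p]; exact add_lt_add hdp h1
      _ < δ := by linarith
  have hr : Set.range f ⊆ A := range_subset_iff.2 hfA
  have h1 : mD A ≤ #(Set.range f) := mD_le hr hdense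
  have h2 : #(Set.range f) ≤ #(s × ℕ) := mk_range_le
  have h3 : #(s × ℕ) = #s * ℵ₀ := by
    rw [mk_prod, mk_nat, lift_aleph0, lift_id']
  have h4 : #s * ℵ₀ ≤ max ℵ₀ (mD B) := by
    calc #s * ℵ₀ ≤ max ℵ₀ (mD B) * max ℵ₀ (mD B) := by
          apply mul_le_mul'
          · rw [hs3]; exact le_max_right _ _
          · exact le_max_left _ _
      _ = max ℵ₀ (mD B) := mul_eq_self (le_max_left _ _)
  calc mD A ≤ #(s × ℕ) := h1.trans h2
    _ ≤ max ℵ₀ (mD B) := h3.le.trans h4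

/-- density of a union -/
theorem mD_iUnion_le {ι : Type u} (B : ι → Set M) :
    mD (⋃ i, B i) ≤ #ι * ⨆ i, mD (B i) := by
  choose s hs1 hs2 hs3 using fun i => mD_exists (B i)
  have h1 : (⋃ i, s i) ⊆ ⋃ i, B i := Set.iUnion_mono hs1
  have h2 : (⋃ i, B i) ⊆ closure (⋃ i, s i) := by
    intro x hx
    obtain ⟨i, hi⟩ := mem_iUnion.1 hx
    exact closure_mono (Set.subset_iUnion s i) (hs2 i hi)
  calc mD (⋃ i, B i) ≤ #(⋃ i, s i) := mD_le h1 h2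
    _ ≤ #ι * ⨆ i, #(s i) := mk_iUnion_le _
    _ = #ι * ⨆ i, mD (B i) := by simp_rw [fun i => hs3 i]


theorem exists_maximal_sep {ε : ℝ} (hε : 0 < ε) (A : Set M) :
    ∃ S, S ⊆ A ∧ Sep ε S ∧ ∀ y ∈ A, ∃ x ∈ S, dist y x < ε := by
  obtain ⟨S, hS⟩ := zorn_subset {S : Set M | S ⊆ A ∧ Sep ε S} (by
    intro c hc hchain
    refine ⟨⋃₀ c, ⟨?_, ?_⟩, fun s hs => subset_sUnion_of_mem hs⟩
    · exact sUnion_subset fun s hs => (hc hs).1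
    · intro x hx y hy hxy
      obtain ⟨sx, hsx, hxsx⟩ := hx
      obtain ⟨sy, hsy, hysy⟩ := hy
      rcases hchain.total hsx hsy with h | h
      · exact (hc hsy).2 x (h hxsx) y hysy hxy
      · exact (hc hsx).2 x hxsx y (h hysy) hxy)
  refine ⟨S, hS.prop.1, hS.prop.2, ?_⟩
  intro y hy
  by_contra hcon
  push_neg at hcon
  have hyS : y ∉ S := by
    intro hyS
    have := hcon y hyS
    simp at this
    linarith
  have hmem : S ∪ {y} ∈ {S : Set M | S ⊆ A ∧ Sep ε S} := by
    constructor
    · exact union_subset hS.prop.1 (by simpa using hy)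
    · intro u hu v hv huv
      rcases hu with hu | hu
      · rcases hv with hv | hv
        · exact hS.prop.2 u hu v hv huv
        · rw [mem_singleton_iff] at hv; subst hv
          rw [dist_comm]; exact hcon u hu
      · rw [mem_singleton_iff] at hu; subst hu
        rcases hv with hv | hv
        · exact hcon v hv
        · rw [mem_singleton_iff] at hv; exact absurd hv.symm huv
  have := hS.eq_of_subset hmem subset_union_left
  exact hyS (this ▸ mem_union_right S rfl : y ∈ S)

/-- key extraction: any regular uncountable cardinal below the density is realized
by a separated subset -/
theorem key_extract {A : Set M} {τ : Cardinal.{u}} (hτ0 : ℵ₀ < τ) (hreg : τ.IsRegular)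
    (hτ : τ ≤ mD A) : ∃ ε : ℝ, 0 < ε ∧ ∃ E, E ⊆ A ∧ Sep ε E ∧ #E = τ := by
  have hstep : ∀ n : ULift.{u} ℕ, ∃ S, S ⊆ A ∧ Sep (1 / (n.down + 1)) S ∧
      ∀ y ∈ A, ∃ x ∈ S, dist y x < 1 / (n.down + 1) :=
    fun n => exists_maximal_sep (by positivity) A
  choose S hS1 hS2 hS3 using hstep
  have hdense : A ⊆ closure (⋃ n, S n) := by
    intro a ha
    rw [Metric.mem_closure_iff]
    intro δ hδ
    obtain ⟨n, hn⟩ := exists_nat_one_div_lt hδ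
    obtain ⟨x, hx, hdx⟩ := hS3 ⟨n⟩ a ha
    exact ⟨x, mem_iUnion.2 ⟨⟨n⟩, hx⟩, hdx.trans (by exact_mod_cast hn)⟩
  have hle : τ ≤ #(⋃ n, S n) :=
    hτ.trans (mD_le (iUnion_subset hS1) hdense)
  have hub : τ ≤ #(ULift.{u} ℕ) * ⨆ n, #(S n) := hle.trans (mk_iUnion_le _)
  have hex : ∃ n, τ ≤ #(S n) := by
    by_contra hcon
    push_neg at hcon
    have h1 : (⨆ n, #(S n)) < τ :=
      iSup_lt_of_isRegular hreg (by rw [mk_eq_aleph0]; exact hτ0) hcon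
    have h2 : #(ULift.{u} ℕ) * ⨆ n, #(S n) < τ :=
      mul_lt_of_lt hreg.1 (by rw [mk_eq_aleph0]; exact hτ0) h1
    exact absurd hub (not_le.2 h2)
  obtain ⟨n, hn⟩ := hex
  obtain ⟨p, hp⟩ := le_mk_iff_exists_set.1 hn
  refine ⟨1 / (n.down + 1), by positivity, (↑) '' p, ?_, ?_, ?_⟩
  · exact (image_subset_iff.2 fun x _ => x.2).trans (hS1 n)
  · intro x hx y hy hxy
    obtain ⟨x', _, rfl⟩ := hx
    obtain ⟨y', _, rfl⟩ := hy
    exact hS2 n x' x'.2 y' y'.2 (fun h => hxy (by rw [h]))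
  · rw [mk_image_eq Subtype.coe_injective, hp]

/-- dependent choice -/
theorem my_dc {α : Type*} {P : ℕ → α → Prop} {R : ℕ → α → α → Prop}
    (h0 : ∃ a, P 0 a) (ih : ∀ k a, P k a → ∃ b, P (k + 1) b ∧ R k a b) :
    ∃ f : ℕ → α, (∀ k, P k (f k)) ∧ ∀ k, R k (f k) (f (k + 1)) := by
  obtain ⟨a0, ha0⟩ := h0
  choose! F hF1 hF2 using ih
  let f : ℕ → α := fun k => Nat.rec a0 (fun k a => F k a) k
  have hP : ∀ k, P k (f k) := by
    intro k
    induction k with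
    | zero => exact ha0
    | succ k ihk => exact hF1 k (f k) ihk
  exact ⟨f, hP, fun k => hF2 k (f k) (hP k)⟩


theorem annulus_step {Γ : Cardinal.{u}} (hΓ : ℵ₀ < Γ) {x : M}
    (hx : ∀ r : ℝ, 0 < r → mD (ball x r) = Γ)
    {ro : ℝ} (hro : 0 < ro) {τ : Cardinal.{u}} (hτ0 : ℵ₀ < τ) (hreg : τ.IsRegular)
    (hτΓ : τ < Γ) :
    ∃ (A : Set M) (ε ri : ℝ), 0 < ε ∧ 0 < ri ∧ ri < ro ∧ Sep ε A ∧
      (∀ y ∈ A, 2 * ri ≤ dist x y ∧ dist x y < ro) ∧ #A = τ := by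
  classical
  set B : ULift.{u} (Option ℕ) → Set M := fun i =>
    match i.down with
    | none => {x}
    | some m => {y | ro / 2 ^ (m + 1) ≤ dist x y ∧ dist x y < ro} with hB
  have hcover : ball x ro = ⋃ i, B i := by
    apply Set.eq_of_subset_of_subset
    · intro y hy
      rw [mem_ball, dist_comm] at hy
      by_cases hyx : y = x
      · exact mem_iUnion.2 ⟨⟨none⟩, by simp [hB, hyx]⟩
      · have hd : 0 < dist x y := dist_pos.2 fun h => hyx h.symm
        obtain ⟨m, hm⟩ := pow_unbounded_of_one_lt (ro / dist x y) (one_lt_two : (1:ℝ) < 2)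
        have h2 : ro / 2 ^ (m + 1) ≤ dist x y := by
          rw [div_le_iff₀ (by positivity)]
          rw [div_lt_iff₀ hd] at hm
          have : (2:ℝ) ^ m ≤ 2 ^ (m+1) := by
            apply pow_le_pow_right₀ (by norm_num) (Nat.le_succ m)
          nlinarith
        exact mem_iUnion.2 ⟨⟨some m⟩, h2, hy⟩
    · apply iUnion_subset
      rintro ⟨i⟩
      match i with
      | none =>
          intro y hy
          simp only [hB, mem_singleton_iff] at hy
          subst hy
          simp [mem_ball, hro]
      | some m =>
          intro y hy
          simp only [hB] at hy
          rw [mem_ball, dist_comm]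
          exact hy.2
  have hΓle : Γ ≤ #(ULift.{u} (Option ℕ)) * ⨆ i, mD (B i) := by
    calc Γ = mD (ball x ro) := (hx ro hro).symm
      _ = mD (⋃ i, B i) := by rw [hcover]
      _ ≤ _ := mD_iUnion_le B
  have hex : ∃ m : ℕ, τ ≤ mD (B ⟨some m⟩) := by
    by_contra hcon
    push_neg at hcon
    have hall : ∀ i, mD (B i) < τ := by
      rintro ⟨i⟩
      match i with
      | none =>
          have h1 : mD (B ⟨none⟩) ≤ 1 := mD_singleton x
          exact h1.trans_lt (lt_trans (by exact_mod_cast one_lt_aleph0) hτ0)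
      | some m => exact hcon m
    have hmk : #(ULift.{u} (Option ℕ)) = ℵ₀ := mk_eq_aleph0 _
    have h1 : (⨆ i, mD (B i)) < τ := iSup_lt_of_isRegular hreg (by rw [hmk]; exact hτ0) hall
    have h2 : #(ULift.{u} (Option ℕ)) * ⨆ i, mD (B i) < τ :=
      mul_lt_of_lt hreg.1 (by rw [hmk]; exact hτ0) h1
    exact absurd (hΓle.trans_lt h2) (not_lt.2 hτΓ.le)
  obtain ⟨m, hm⟩ := hex
  obtain ⟨ε, hε, E, hE1, hE2, hE3⟩ := key_extract hτ0 hreg hm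
  refine ⟨E, ε, ro / 2 ^ (m + 2), hε, by positivity, ?_, hE2, ?_, hE3⟩
  · apply div_lt_self hro
    exact one_lt_pow₀ (by norm_num) (by norm_num)
  · intro y hy
    have := hE1 hy
    simp only [hB, mem_setOf_eq] at this
    refine ⟨?_, this.2⟩
    have : ro / 2 ^ (m + 1) ≤ dist x y := this.1
    calc 2 * (ro / 2 ^ (m + 2)) = ro / 2 ^ (m + 1) := by rw [pow_succ]; ring
      _ ≤ dist x y := this

structure St (M : Type u) where
  A : Set M
  ε : ℝ
  ri : ℝ
  ro : ℝ

theorem annulus_main {Γ : Cardinal.{u}} (hΓ : ℵ₀ < Γ)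
    (g : ℕ → Cardinal.{u}) (hg : ∀ n, g n < Γ) (hsup : Γ ≤ ⨆ n, g n)
    (hlim : ∀ c < Γ, Order.succ (max ℵ₀ c) < Γ)
    (x : M) (hx : ∀ r : ℝ, 0 < r → mD (ball x r) = Γ) :
    ∃ L : Set M, #L = Γ ∧ ∀ a ∈ L, ∃ r > (0:ℝ), ∀ b ∈ L, dist a b < r → b = a := by
  classical
  set τ : ℕ → Cardinal.{u} := fun k => Order.succ (max ℵ₀ (g k)) with hτdef
  have hτΓ : ∀ k, τ k < Γ := fun k => by
    have : max ℵ₀ (g k) < Γ := max_lt hΓ (hg k)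
    simpa [hτdef, max_comm] using hlim _ this
  have hτ0 : ∀ k, ℵ₀ < τ k := fun k =>
    lt_of_le_of_lt (le_max_left _ _) (Order.lt_succ_of_not_isMax (not_isMax _))
  have hτreg : ∀ k, (τ k).IsRegular := fun k => isRegular_succ (le_max_left _ _)
  have hgτ : ∀ k, g k ≤ τ k := fun k =>
    le_trans (le_max_right _ _) (Order.le_succ _)
  -- invariant
  set P : ℕ → St M → Prop := fun k s =>
    0 < s.ε ∧ 0 < s.ri ∧ s.ri < s.ro ∧ Sep s.ε s.A ∧
      (∀ y ∈ s.A, 2 * s.ri ≤ dist x y ∧ dist x y < s.ro) ∧ #s.A = τ k with hPdef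
  set R : ℕ → St M → St M → Prop := fun _ s s' => s'.ro = s.ri with hRdef
  have hstep : ∀ (k : ℕ) (ro : ℝ), 0 < ro → ∃ s : St M, P k s ∧ s.ro = ro := by
    intro k ro hro
    obtain ⟨A, ε, ri, h1, h2, h3, h4, h5, h6⟩ :=
      annulus_step hΓ hx hro (hτ0 k) (hτreg k) (hτΓ k)
    exact ⟨⟨A, ε, ri, ro⟩, ⟨h1, h2, h3, h4, h5, h6⟩, rfl⟩
  obtain ⟨f, hPf, hRf⟩ := my_dc (P := P) (R := R)
    (by obtain ⟨s, hs, _⟩ := hstep 0 1 one_pos; exact ⟨s, hs⟩)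
    (by
      intro k a hP
      obtain ⟨s, hs, hro⟩ := hstep (k+1) a.ri hP.2.1
      exact ⟨s, hs, hro⟩)
  -- ro decreasing below ri of earlier levels
  have hchain : ∀ k m, k < m → (f m).ro ≤ (f k).ri := by
    intro k m hkm
    induction m with
    | zero => omega
    | succ m ihm =>
        rcases Nat.lt_succ_iff_lt_or_eq.1 hkm with h | h
        · have h1 : (f (m+1)).ro = (f m).ri := hRf m
          have h2 : (f m).ri < (f m).ro := (hPf m).2.2.1
          exact le_trans (le_of_eq h1) (le_trans h2.le (ihm h))
        · subst h
          exact le_of_eq (hRf k)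
  set L : Set M := ⋃ k : ULift.{u} ℕ, (f k.down).A with hLdef
  have hmemA : ∀ k, (f k).A ⊆ L := fun k => subset_iUnion (fun j : ULift.{u} ℕ => (f j.down).A) ⟨k⟩
  refine ⟨L, ?_, ?_⟩
  · apply le_antisymm
    · calc #L ≤ #(ULift.{u} ℕ) * ⨆ k : ULift.{u} ℕ, #((f k.down).A) := mk_iUnion_le _
        _ ≤ ℵ₀ * Γ := by
            apply mul_le_mul'
            · rw [mk_eq_aleph0]
            · exact ciSup_le fun k => ((hPf k.down).2.2.2.2.2).le.trans (hτΓ k.down).le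
        _ = Γ := by rw [mul_eq_max le_rfl hΓ.le, max_eq_right hΓ.le]
    · refine hsup.trans (ciSup_le fun n => ?_)
      calc g n ≤ τ n := hgτ n
        _ = #((f n).A) := ((hPf n).2.2.2.2.2).symm
        _ ≤ #L := mk_le_mk_of_subset (hmemA n)
  · intro a ha
    obtain ⟨⟨k⟩, hak⟩ := mem_iUnion.1 ha
    refine ⟨min (f k).ε (f k).ri, lt_min (hPf k).1 (hPf k).2.1, ?_⟩
    intro b hb hab
    obtain ⟨⟨m⟩, hbm⟩ := mem_iUnion.1 hb
    by_contra hne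
    rcases lt_trichotomy k m with h | h | h
    · -- b in later level : dist x b < ro_m ≤ ri_k, dist x a ≥ 2 ri_k
      have h1 : dist x b < (f m).ro := ((hPf m).2.2.2.2.1 b hbm).2
      have h2 : 2 * (f k).ri ≤ dist x a := ((hPf k).2.2.2.2.1 a hak).1
      have h3 : (f m).ro ≤ (f k).ri := hchain k m h
      have h4 : dist x a ≤ dist x b + dist b a := dist_triangle _ _ _
      rw [dist_comm b a] at h4
      have : (f k).ri ≤ dist a b := by nlinarith
      have : dist a b < (f k).ri := lt_of_lt_of_le hab (min_le_right _ _)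
      linarith
    · subst h
      have := (hPf k).2.2.2.1 a hak b hbm (fun hh => hne hh.symm)
      have : dist a b < (f k).ε := lt_of_lt_of_le hab (min_le_left _ _)
      linarith [(hPf k).2.2.2.1 a hak b hbm (fun hh => hne hh.symm)]
    · -- b in earlier level m < k
      have h1 : dist x a < (f k).ro := ((hPf k).2.2.2.2.1 a hak).2
      have h2 : 2 * (f m).ri ≤ dist x b := ((hPf m).2.2.2.2.1 b hbm).1
      have h3 : (f k).ro ≤ (f m).ri := hchain m k h
      have h4 : dist x b ≤ dist x a + dist a b := dist_triangle _ _ _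
      have h5 : (f k).ro ≤ dist a b := by nlinarith
      have h6 : dist a b < (f k).ri := lt_of_lt_of_le hab (min_le_right _ _)
      linarith [(hPf k).2.2.1]

structure St2 (M : Type u) where
  A : Set M
  ε : ℝ
  F : Set M
  c : Cardinal.{u}
  n : ℕ
  j : ℕ

/-- points whose ball of radius 1/(n+1) has density at most g j -/
def Pool (g : ℕ → Cardinal.{u}) (n j : ℕ) : Set M :=
  {x : M | mD (ball x (1 / (n + 1))) ≤ g j}

theorem pool_extract {Γ : Cardinal.{u}} (hΓ : ℵ₀ < Γ) (hΓuniv : mD (univ : Set M) = Γ)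
    {g : ℕ → Cardinal.{u}} (hsuplt : ∀ c < Γ, ∃ j, c < g j)
    (hT : ∀ x : M, ∃ r : ℝ, 0 < r ∧ mD (ball x r) < Γ)
    {τ : Cardinal.{u}} (hτ0 : ℵ₀ < τ) (hreg : τ.IsRegular) (hτΓ : τ < Γ) :
    ∃ (n j : ℕ) (ε : ℝ) (E : Set M), 0 < ε ∧ E ⊆ Pool g n j ∧ Sep ε E ∧ #E = τ := by
  classical
  have hcover : (univ : Set M) = ⋃ p : ULift.{u} (ℕ × ℕ), Pool g p.down.1 p.down.2 := by
    apply Set.eq_of_subset_of_subset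
    · intro x _
      obtain ⟨r, hr, hrd⟩ := hT x
      obtain ⟨n, hn⟩ := exists_nat_one_div_lt hr
      have h1 : mD (ball x (1 / (n + 1))) ≤ max ℵ₀ (mD (ball x r)) :=
        mD_mono (ball_subset_ball (le_of_lt hn))
      have h2 : mD (ball x (1 / (n + 1))) < Γ := h1.trans_lt (max_lt hΓ hrd)
      obtain ⟨j, hj⟩ := hsuplt _ h2
      exact mem_iUnion.2 ⟨⟨(n, j)⟩, hj.le⟩
    · exact subset_univ _
  have hΓle : Γ ≤ #(ULift.{u} (ℕ × ℕ)) * ⨆ p : ULift.{u} (ℕ × ℕ), mD (Pool (M := M) g p.down.1 p.down.2) := by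
    calc Γ = mD (univ : Set M) := hΓuniv.symm
      _ = mD (⋃ p : ULift.{u} (ℕ × ℕ), Pool (M := M) g p.down.1 p.down.2) := by rw [← hcover]
      _ ≤ _ := mD_iUnion_le _
  have hex : ∃ n j : ℕ, τ ≤ mD (Pool (M := M) g n j) := by
    by_contra hcon
    push_neg at hcon
    have hmk : #(ULift.{u} (ℕ × ℕ)) = ℵ₀ := mk_eq_aleph0 _
    have h1 : (⨆ p : ULift.{u} (ℕ × ℕ), mD (Pool (M := M) g p.down.1 p.down.2)) < τ :=
      iSup_lt_of_isRegular hreg (by rw [hmk]; exact hτ0) (fun p => hcon p.down.1 p.down.2)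
    have h2 : #(ULift.{u} (ℕ × ℕ)) * ⨆ p : ULift.{u} (ℕ × ℕ), mD (Pool (M := M) g p.down.1 p.down.2) < τ :=
      mul_lt_of_lt hreg.1 (by rw [hmk]; exact hτ0) h1
    exact absurd (hΓle.trans_lt h2) (not_lt.2 hτΓ.le)
  obtain ⟨n, j, hnj⟩ := hex
  obtain ⟨ε, hε, E, hE1, hE2, hE3⟩ := key_extract hτ0 hreg hnj
  exact ⟨n, j, ε, E, hε, hE1, hE2, hE3⟩

theorem capacity_step {Γ : Cardinal.{u}} (hΓ : ℵ₀ < Γ) {g : ℕ → Cardinal.{u}}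
    (hg : ∀ n, g n < Γ) {F A : Set M} {c : Cardinal.{u}} {n j : ℕ}
    (hFc : mD F ≤ c) (hcΓ : c < Γ) (hA : A ⊆ Pool g n j) (hAΓ : #A < Γ) :
    mD (F ∪ ⋃ y : A, ball (y : M) (1 / (n + 1) / 2)) ≤ (#A + 1) * max c (max ℵ₀ (g j)) ∧
      (#A + 1) * max c (max ℵ₀ (g j)) < Γ := by
  classical
  constructor
  · set B : Option A → Set M := fun i =>
      match i with
      | none => F
      | some y => ball (y : M) (1 / (n + 1) / 2) with hB
    have hun : F ∪ ⋃ y : A, ball (y : M) (1 / (n + 1) / 2) = ⋃ i, B i := by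
      apply Set.eq_of_subset_of_subset
      · rintro z (hz | hz)
        · exact mem_iUnion.2 ⟨none, hz⟩
        · obtain ⟨y, hy⟩ := mem_iUnion.1 hz
          exact mem_iUnion.2 ⟨some y, hy⟩
      · apply iUnion_subset
        rintro (_ | y)
        · exact subset_union_left
        · exact subset_union_right.trans' (subset_iUnion (fun y : A => ball (y : M) (1 / (n + 1) / 2)) y)
    rw [hun]
    calc mD (⋃ i, B i) ≤ #(Option A) * ⨆ i, mD (B i) := mD_iUnion_le B
      _ ≤ (#A + 1) * max c (max ℵ₀ (g j)) := by
          apply mul_le_mul'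
          · rw [mk_option]
          · apply ciSup_le
            rintro (_ | y)
            · exact le_max_of_le_left hFc
            · refine le_max_of_le_right ?_
              have h1 : mD (ball (y : M) (1 / (n + 1) / 2)) ≤
                  max ℵ₀ (mD (ball (y : M) (1 / (n + 1)))) :=
                mD_mono (ball_subset_ball (half_le_self (by positivity)))
              exact h1.trans (max_le_max le_rfl (hA y.2))
  · apply mul_lt_of_lt hΓ.le
    · exact add_lt_of_lt hΓ.le hAΓ (lt_trans one_lt_aleph0 hΓ)
    · exact max_lt hcΓ (max_lt hΓ (hg j))

theorem levels_step {Γ : Cardinal.{u}} (hΓ : ℵ₀ < Γ) (hΓuniv : mD (univ : Set M) = Γ)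
    {g : ℕ → Cardinal.{u}} (hg : ∀ n, g n < Γ) (hsuplt : ∀ c < Γ, ∃ j, c < g j)
    (hlim : ∀ c < Γ, Order.succ (max ℵ₀ c) < Γ)
    (hT : ∀ x : M, ∃ r : ℝ, 0 < r ∧ mD (ball x r) < Γ)
    (k : ℕ) (F : Set M) (c : Cardinal.{u}) (hFc : mD F ≤ c) (hcΓ : c < Γ) :
    ∃ s : St2 M, s.F = F ∧ s.c = c ∧ 0 < s.ε ∧ Sep s.ε s.A ∧ s.A ⊆ Pool g s.n s.j ∧
      s.A ∩ s.F = ∅ ∧ #s.A = Order.succ (max ℵ₀ (max (g k) c)) := by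
  classical
  set τ : Cardinal.{u} := Order.succ (max ℵ₀ (max (g k) c)) with hτdef
  have hτΓ : τ < Γ := hlim _ (max_lt (hg k) hcΓ)
  have hτ0 : ℵ₀ < τ := lt_of_le_of_lt (le_max_left _ _) (Order.lt_succ_of_not_isMax (not_isMax _))
  have hτreg : τ.IsRegular := isRegular_succ (le_max_left _ _)
  have hcτ : c < τ :=
    lt_of_le_of_lt (le_trans (le_max_right _ _) (le_max_right _ _))
      (Order.lt_succ_of_not_isMax (not_isMax _))
  obtain ⟨n, j, ε, E, hε, hE1, hE2, hE3⟩ := pool_extract hΓ hΓuniv hsuplt hT hτ0 hτreg hτΓ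
  refine ⟨⟨E \ F, ε, F, c, n, j⟩, rfl, rfl, hε, ?_, ?_, ?_, ?_⟩
  · exact fun u hu v hv huv => hE2 u hu.1 v hv.1 huv
  · exact (diff_subset).trans hE1
  · exact diff_inter_self_eq_diff ▸ (by simp [Set.diff_inter_self])
  · -- cardinality of E \ F is τ
    have hEF : #(E ∩ F : Set M) ≤ c := by
      refine (sep_card_le hε (fun u hu v hv huv => hE2 u hu.1 v hv.1 huv)
        (inter_subset_right)).trans hFc
    have hsplit : E = (E ∩ F) ∪ (E \ F) := (inter_union_diff E F).symm
    have hle : #(E \ F : Set M) ≤ τ := hE3 ▸ mk_le_mk_of_subset diff_subset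
    rcases lt_or_eq_of_le hle with hlt | heq
    · exfalso
      have h1 : #E ≤ #(E ∩ F : Set M) + #(E \ F : Set M) := by
        conv_lhs => rw [hsplit]
        exact mk_union_le _ _
      have h2 : #(E ∩ F : Set M) + #(E \ F : Set M) < τ :=
        add_lt_of_lt hτ0.le (lt_of_le_of_lt hEF hcτ) hlt
      rw [hE3] at h1
      exact absurd (h1.trans_lt h2) (lt_irrefl τ)
    · exact heq

theorem levels_main {Γ : Cardinal.{u}} (hΓ : ℵ₀ < Γ) (hΓuniv : mD (univ : Set M) = Γ)
    (g : ℕ → Cardinal.{u}) (hg : ∀ n, g n < Γ) (hsup : Γ ≤ ⨆ n, g n)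
    (hsuplt : ∀ c < Γ, ∃ j, c < g j)
    (hlim : ∀ c < Γ, Order.succ (max ℵ₀ c) < Γ)
    (hT : ∀ x : M, ∃ r : ℝ, 0 < r ∧ mD (ball x r) < Γ) :
    ∃ L : Set M, #L = Γ ∧ ∀ a ∈ L, ∃ r > (0:ℝ), ∀ b ∈ L, dist a b < r → b = a := by
  classical
  set P : ℕ → St2 M → Prop := fun k s =>
    0 < s.ε ∧ Sep s.ε s.A ∧ s.A ⊆ Pool g s.n s.j ∧ s.A ∩ s.F = ∅ ∧
      mD s.F ≤ s.c ∧ s.c < Γ ∧ #s.A = Order.succ (max ℵ₀ (max (g k) s.c)) with hPdef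
  set R : ℕ → St2 M → St2 M → Prop := fun _ s s' =>
    s'.F = s.F ∪ ⋃ y : s.A, ball (y : M) (1 / (s.n + 1) / 2) with hRdef
  have hcard_lt : ∀ k (s : St2 M), P k s → #s.A < Γ := by
    intro k s hP
    rw [hP.2.2.2.2.2.2]
    exact hlim _ (max_lt (hg k) hP.2.2.2.2.2.1)
  obtain ⟨f, hPf, hRf⟩ := my_dc (P := P) (R := R)
    (by
      obtain ⟨s, h1, h2, h3, h4, h5, h6, h7⟩ :=
        levels_step hΓ hΓuniv hg hsuplt hlim hT 0 ∅ ℵ₀ (by rw [mD_empty]; exact zero_le) hΓ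
      refine ⟨s, h3, h4, h5, h6, ?_, ?_, ?_⟩
      · rw [h1, h2, mD_empty]; exact zero_le
      · rw [h2]; exact hΓ
      · rw [h7, h2])
    (by
      intro k s hP
      have hcap := capacity_step hΓ hg hP.2.2.2.2.1 hP.2.2.2.2.2.1 hP.2.2.1 (hcard_lt k s hP)
      obtain ⟨s', h1, h2, h3, h4, h5, h6, h7⟩ :=
        levels_step hΓ hΓuniv hg hsuplt hlim hT (k + 1)
          (s.F ∪ ⋃ y : s.A, ball (y : M) (1 / (s.n + 1) / 2))
          ((#s.A + 1) * max s.c (max ℵ₀ (g s.j))) hcap.1 hcap.2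
      refine ⟨s', ⟨h3, h4, h5, h6, ?_, ?_, by rw [h7, h2]⟩, h1⟩
      · rw [h1, h2]; exact hcap.1
      · rw [h2]; exact hcap.2)
  have hFmono : ∀ k m, k ≤ m → (f k).F ⊆ (f m).F := by
    intro k m hkm
    induction m with
    | zero => rw [Nat.le_zero.1 hkm]
    | succ m ihm =>
        rcases Nat.le_succ_iff_eq_or_le.1 hkm with h | h
        · rw [h]
        · refine (ihm h).trans ?_
          rw [hRf m]
          exact subset_union_left
  have hballF : ∀ k y, y ∈ (f k).A → ball y (1 / ((f k).n + 1) / 2) ⊆ (f (k + 1)).F := by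
    intro k y hy
    rw [hRf k]
    exact (subset_iUnion (fun z : (f k).A => ball (z : M) (1 / ((f k).n + 1) / 2))
      ⟨y, hy⟩).trans subset_union_right
  set L : Set M := ⋃ k : ULift.{u} ℕ, (f k.down).A with hLdef
  have hmemA : ∀ k, (f k).A ⊆ L := fun k =>
    subset_iUnion (fun j : ULift.{u} ℕ => (f j.down).A) ⟨k⟩
  refine ⟨L, ?_, ?_⟩
  · apply le_antisymm
    · calc #L ≤ #(ULift.{u} ℕ) * ⨆ k : ULift.{u} ℕ, #((f k.down).A) := mk_iUnion_le _
        _ ≤ ℵ₀ * Γ := by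
            apply mul_le_mul'
            · rw [mk_eq_aleph0]
            · exact ciSup_le fun k => (hcard_lt k.down (f k.down) (hPf k.down)).le
        _ = Γ := by rw [mul_eq_max le_rfl hΓ.le, max_eq_right hΓ.le]
    · refine hsup.trans (ciSup_le fun n => ?_)
      have h1 : g n ≤ #((f n).A) := by
        rw [(hPf n).2.2.2.2.2.2]
        exact le_trans (le_trans (le_max_left _ _) (le_max_right _ _)) (Order.le_succ _)
      exact h1.trans (mk_le_mk_of_subset (hmemA n))
  · intro a ha
    obtain ⟨⟨k⟩, hak⟩ := mem_iUnion.1 ha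
    have hne : (Finset.range (k + 1)).Nonempty := ⟨0, Finset.mem_range.2 (Nat.succ_pos k)⟩
    set δ₂ : ℝ := (Finset.range (k + 1)).inf' hne (fun i => 1 / ((f i).n + 1) / 2) with hδ₂def
    have hδ₂pos : 0 < δ₂ := by
      rw [hδ₂def, Finset.lt_inf'_iff]
      intro i _
      positivity
    have hδ₂le : ∀ i, i ≤ k → δ₂ ≤ 1 / ((f i).n + 1) / 2 := fun i hi =>
      Finset.inf'_le _ (Finset.mem_range.2 (Nat.lt_succ_of_le hi))
    refine ⟨min (f k).ε δ₂, lt_min (hPf k).1 hδ₂pos, ?_⟩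
    intro b hb hab
    obtain ⟨⟨m⟩, hbm⟩ := mem_iUnion.1 hb
    by_contra hne'
    rcases lt_trichotomy k m with h | h | h
    · -- later level
      have h1 : dist b a < 1 / ((f k).n + 1) / 2 := by
        rw [dist_comm]
        exact lt_of_lt_of_le hab ((min_le_right _ _).trans (hδ₂le k le_rfl))
      have h2 : b ∈ (f m).F := hFmono (k + 1) m h (hballF k a hak (mem_ball.2 h1))
      have h3 : b ∈ (f m).A ∩ (f m).F := ⟨hbm, h2⟩
      rw [(hPf m).2.2.2.1] at h3
      exact absurd h3 (notMem_empty b)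
    · subst h
      have := (hPf k).2.1 a hak b hbm (fun hh => hne' hh.symm)
      have h2 : dist a b < (f k).ε := lt_of_lt_of_le hab (min_le_left _ _)
      linarith
    · -- earlier level
      have h1 : dist a b < 1 / ((f m).n + 1) / 2 :=
        lt_of_lt_of_le hab ((min_le_right _ _).trans (hδ₂le m h.le))
      have h2 : a ∈ (f k).F := hFmono (m + 1) k h (hballF m b hbm (mem_ball.2 h1))
      have h3 : a ∈ (f k).A ∩ (f k).F := ⟨hak, h2⟩
      rw [(hPf k).2.2.2.1] at h3
      exact absurd h3 (notMem_empty a)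

theorem densChar_eq_mD (M : Type u) [MetricSpace M] :
    densChar M = mD (univ : Set M) := by
  unfold densChar mD
  congr 1
  ext c
  constructor
  · rintro ⟨s, hs, rfl⟩
    exact ⟨s, subset_univ s, fun x _ => hs x, rfl⟩
  · rintro ⟨s, _, hs, rfl⟩
    exact ⟨s, fun x => hs (mem_univ x), rfl⟩

end Stmt15

open Cardinal Metric Set Stmt15

theorem stmt15 {M : Type u} [MetricSpace M] (Γ : Cardinal.{u})
    (hdens : densChar M = Γ) (hΓ : Cardinal.aleph0 < Γ) :
    ∃ L : Set M, Cardinal.mk L = Γ ∧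
      ∀ a ∈ L, ∃ r > (0 : ℝ), ∀ b ∈ L, dist a b < r → b = a := by
  classical
  have hmd : mD (univ : Set M) = Γ := by rw [← Stmt15.densChar_eq_mD M, hdens]
  have hstep : ∀ n : ℕ, ∃ S : Set M, S ⊆ univ ∧ Sep (1 / (n + 1)) S ∧
      ∀ y ∈ (univ : Set M), ∃ x ∈ S, dist y x < 1 / (n + 1) :=
    fun n => Stmt15.exists_maximal_sep (by positivity) _
  choose S hS1 hS2 hS3 using hstep
  have hSle : ∀ n, #(S n) ≤ Γ := fun n =>
    (Stmt15.sep_card_le (by positivity) (hS2 n) (subset_univ _)).trans hmd.le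
  by_cases hone : ∃ n, #(S n) = Γ
  · obtain ⟨n, hn⟩ := hone
    refine ⟨S n, hn, fun a ha => ⟨1 / (n + 1), by positivity, fun b hb hab => ?_⟩⟩
    by_contra hne
    have := hS2 n a ha b hb (fun h => hne h.symm)
    linarith
  · push_neg at hone
    have hglt : ∀ n, #(S n) < Γ := fun n => lt_of_le_of_ne (hSle n) (hone n)
    set g : ℕ → Cardinal.{u} := fun n => #(S n) with hgdef
    have hsupeq : (⨆ n : ULift.{u} ℕ, g n.down) = ⨆ n, g n :=
      le_antisymm (ciSup_le fun n => le_ciSup (Cardinal.bddAbove_range _) n.down)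
        (ciSup_le fun n => le_ciSup (Cardinal.bddAbove_range _) (ULift.up n))

    have hsup : Γ ≤ ⨆ n, g n := by
      have hdense : (univ : Set M) ⊆ closure (⋃ n : ULift.{u} ℕ, S n.down) := by
        intro a _
        rw [Metric.mem_closure_iff]
        intro δ hδ
        obtain ⟨n, hn⟩ := exists_nat_one_div_lt hδ
        obtain ⟨x, hx, hdx⟩ := hS3 n a (Set.mem_univ a)
        exact ⟨x, Set.mem_iUnion.2 ⟨⟨n⟩, hx⟩, hdx.trans (by exact_mod_cast hn)⟩
      have h1 : Γ ≤ #(⋃ n : ULift.{u} ℕ, S n.down) := by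
        rw [← hmd]
        exact Stmt15.mD_le (Set.iUnion_subset fun n => hS1 n.down) hdense
      have h2 : Γ ≤ ℵ₀ * ⨆ n : ULift.{u} ℕ, g n.down := by
        refine h1.trans ((Cardinal.mk_iUnion_le _).trans ?_)
        exact mul_le_mul' (by rw [Cardinal.mk_eq_aleph0]) le_rfl
      set X := ⨆ n : ULift.{u} ℕ, g n.down with hX
      have h3 : ℵ₀ * X ≤ max ℵ₀ X := by
        calc ℵ₀ * X ≤ max ℵ₀ X * max ℵ₀ X := mul_le_mul' (le_max_left _ _) (le_max_right _ _)
          _ = max ℵ₀ X := Cardinal.mul_eq_self (le_max_left _ _)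
      have h4 : Γ ≤ X := by
        rcases max_cases ℵ₀ X with ⟨he, _⟩ | ⟨he, _⟩
        · exact absurd ((h2.trans h3).trans_eq he) (not_le.2 hΓ)
        · exact (h2.trans h3).trans_eq he
      rw [← hsupeq]
      exact h4
    have hsuplt : ∀ c < Γ, ∃ j, c < g j := fun c hc =>
      (lt_ciSup_iff (Cardinal.bddAbove_range _)).1 (hc.trans_le hsup)
    have hlim : ∀ c < Γ, Order.succ (max ℵ₀ c) < Γ := by
      intro c hc
      have h1 : Order.succ (max ℵ₀ c) ≤ Γ := Order.succ_le_of_lt (max_lt hΓ hc)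
      rcases lt_or_eq_of_le h1 with h | h
      · exact h
      · exfalso
        have hreg : Γ.IsRegular := h ▸ Cardinal.isRegular_succ (le_max_left ℵ₀ c)
        have h2 : (⨆ n : ULift.{u} ℕ, g n.down) < Γ :=
          Cardinal.iSup_lt_of_isRegular hreg (by rw [Cardinal.mk_eq_aleph0]; exact hΓ)
            (fun n => hglt n.down)
        rw [hsupeq] at h2
        exact absurd hsup (not_le.2 h2)
    by_cases hTex : ∃ x : M, ∀ r : ℝ, 0 < r → Stmt15.mD (Metric.ball x r) = Γ
    · obtain ⟨x, hx⟩ := hTex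
      exact Stmt15.annulus_main hΓ g hglt hsup hlim x hx
    · push_neg at hTex
      have hT : ∀ x : M, ∃ r : ℝ, 0 < r ∧ Stmt15.mD (Metric.ball x r) < Γ := by
        intro x
        obtain ⟨r, hr, hne⟩ := hTex x
        refine ⟨r, hr, lt_of_le_of_ne ?_ hne⟩
        have := Stmt15.mD_mono (Set.subset_univ (Metric.ball x r))
        rwa [hmd, max_eq_right hΓ.le] at this
      exact Stmt15.levels_main hΓ hmd g hglt hsup hsuplt hlim hT
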